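/- There exists an increasing function f₂ : MorseGauges × ℝ≥1 → MorseGauges such that for any geodesic metric space X, any Morse gauge M, any C ≥ 1, any M-Morse geodesic γ : I → X, and any subinterval J ⊆ I, the restriction γ|_J is f₂(M, C)-Morse. More generally, any subsegment of an M-Morse C-quasi-geodesic is f₂(M, C)-Morse. -/

import Mathlib

open Set Metric

universe u

/-- `γ` restricted to `I` is a `(lam, eps)`-quasi-geodesic. -/
def IsQuasiGeodesicOn {X : Type*} [MetricSpace X] (γ : ℝ → X) (I : Set ℝ)
    (lam eps : ℝ) : Prop :=
  ∀ s ∈ I, ∀ t ∈ I,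
    (1 / lam) * |s - t| - eps ≤ dist (γ s) (γ t) ∧ dist (γ s) (γ t) ≤ lam * |s - t| + eps

/-- `γ` restricted to `I` is a (unit-speed) geodesic. -/
def IsGeodesicOn {X : Type*} [MetricSpace X] (γ : ℝ → X) (I : Set ℝ) : Prop :=
  ∀ s ∈ I, ∀ t ∈ I, dist (γ s) (γ t) = |s - t|

/-- A metric space is geodesic if any two points are joined by a geodesic. -/
def GeodesicSpace (X : Type*) [MetricSpace X] : Prop :=
  ∀ x y : X, ∃ γ : ℝ → X, γ 0 = x ∧ γ (dist x y) = y ∧ IsGeodesicOn γ (Icc 0 (dist x y))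

/-- A Morse gauge: an increasing map `ℝ≥1 × ℝ≥0 → ℝ≥0`, continuous in the second argument. -/
def IsMorseGauge (M : ℝ → ℝ → ℝ) : Prop :=
  (∀ l e, 1 ≤ l → 0 ≤ e → 0 ≤ M l e) ∧
  (∀ l l' e e', 1 ≤ l → 0 ≤ e → l ≤ l' → e ≤ e' → M l e ≤ M l' e') ∧
  (∀ l, 1 ≤ l → ContinuousOn (fun e => M l e) (Ici 0))

/-- Pointwise partial order on Morse gauges (on the domain `ℝ≥1 × ℝ≥0`). -/
def GaugeLE (M N : ℝ → ℝ → ℝ) : Prop :=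
  ∀ l e, 1 ≤ l → 0 ≤ e → M l e ≤ N l e

/-- `γ` restricted to `I` is `M`-Morse: every continuous `(lam, eps)`-quasi-geodesic with
endpoints on `γ` lies in the closed `M lam eps`-neighbourhood of `γ`. -/
def IsMorseWith {X : Type*} [MetricSpace X] (M : ℝ → ℝ → ℝ) (γ : ℝ → X) (I : Set ℝ) : Prop :=
  ∀ lam eps : ℝ, 1 ≤ lam → 0 ≤ eps →
    ∀ (η : ℝ → X) (a b : ℝ), a ≤ b →
      ContinuousOn η (Icc a b) → IsQuasiGeodesicOn η (Icc a b) lam eps →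
      η a ∈ γ '' I → η b ∈ γ '' I →
      ∀ t ∈ Icc a b, ∃ s ∈ I, dist (η t) (γ s) ≤ M lam eps

/-- The constant `δ_M` associated to a Morse gauge `M`. -/
def morseDelta (M : ℝ → ℝ → ℝ) : ℝ :=
  max (4 * M 1 (2 * M 5 0) + 2 * M 5 0) (8 * M 3 0)

set_option maxHeartbeats 1000000

namespace Statement2Aux

/-- The explicit gauge for statement 2. -/
def f2aux (C m l e : ℝ) : ℝ :=
  l ^ 2 * ((2 * m + 2 + 2 * (C * (C * (2 * m + 2 + C)) + C)) + e) + e + (m + 1) +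
    (C * (C * (2 * m + 2 + C)) + C)

lemma f2aux_basic {C m l e : ℝ} (hC : 1 ≤ C) (hm : 0 ≤ m) (hl : 1 ≤ l) (he : 0 ≤ e) :
    0 ≤ f2aux C m l e ∧ m ≤ f2aux C m l e := by
  have h1 : (0:ℝ) ≤ 2 * m + 2 + C := by linarith
  have h2 : (0:ℝ) ≤ C * (2 * m + 2 + C) := mul_nonneg (by linarith) h1
  have h3 : (0:ℝ) ≤ C * (C * (2 * m + 2 + C)) + C := by
    have := mul_nonneg (by linarith : (0:ℝ) ≤ C) h2; linarith
  have h4 : (0:ℝ) ≤ (2 * m + 2 + 2 * (C * (C * (2 * m + 2 + C)) + C)) + e := by linarith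
  have h5 : (0:ℝ) ≤ l ^ 2 * ((2 * m + 2 + 2 * (C * (C * (2 * m + 2 + C)) + C)) + e) :=
    mul_nonneg (sq_nonneg l) h4
  constructor <;> (unfold f2aux; linarith)

lemma f2aux_mono {C C' m m' l l' e e' : ℝ} (hC : 1 ≤ C) (hm : 0 ≤ m) (hl : 1 ≤ l)
    (he : 0 ≤ e) (hCC : C ≤ C') (hmm : m ≤ m') (hll : l ≤ l') (hee : e ≤ e') :
    f2aux C m l e ≤ f2aux C' m' l' e' := by
  have hC'0 : (0:ℝ) ≤ C' := by linarith
  have hA : 2 * m + 2 + C ≤ 2 * m' + 2 + C' := by linarith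
  have hA0 : (0:ℝ) ≤ 2 * m + 2 + C := by linarith
  have hX : C * (2 * m + 2 + C) ≤ C' * (2 * m' + 2 + C') := mul_le_mul hCC hA hA0 hC'0
  have hX0 : (0:ℝ) ≤ C * (2 * m + 2 + C) := mul_nonneg (by linarith) hA0
  have hY : C * (C * (2 * m + 2 + C)) + C ≤ C' * (C' * (2 * m' + 2 + C')) + C' := by
    have := mul_le_mul hCC hX hX0 hC'0; linarith
  have hY0 : (0:ℝ) ≤ C * (C * (2 * m + 2 + C)) + C := by
    have := mul_nonneg (by linarith : (0:ℝ) ≤ C) hX0; linarith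
  have hZ : (2 * m + 2 + 2 * (C * (C * (2 * m + 2 + C)) + C)) + e ≤
      (2 * m' + 2 + 2 * (C' * (C' * (2 * m' + 2 + C')) + C')) + e' := by linarith
  have hZ0 : (0:ℝ) ≤ (2 * m + 2 + 2 * (C * (C * (2 * m + 2 + C)) + C)) + e := by linarith
  have hl2 : l ^ 2 ≤ l' ^ 2 := by nlinarith
  have hfinal : l ^ 2 * ((2 * m + 2 + 2 * (C * (C * (2 * m + 2 + C)) + C)) + e) ≤
      l' ^ 2 * ((2 * m' + 2 + 2 * (C' * (C' * (2 * m' + 2 + C')) + C')) + e') :=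
    mul_le_mul hl2 hZ hZ0 (by positivity)
  unfold f2aux; linarith

lemma exists_close {X : Type u} [MetricSpace X] {A : Set X} {x : X} {m : ℝ}
    (hA : A.Nonempty) (h : infDist x A ≤ m) : ∃ y ∈ A, dist x y ≤ m + 1 := by
  obtain ⟨y, hy, hd⟩ := (infDist_lt_iff hA).1 (lt_of_le_of_lt h (lt_add_one m))
  exact ⟨y, hy, hd.le⟩

lemma crossing {X : Type u} [MetricSpace X] (η : ℝ → X) (x y : ℝ) (hxy : x ≤ y)
    (hcont : ContinuousOn η (Icc x y)) (A B : Set X) (m : ℝ)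
    (hcover : ∀ u ∈ Icc x y, infDist (η u) A ≤ m ∨ infDist (η u) B ≤ m)
    (hx : infDist (η x) A ≤ m) (hy : infDist (η y) B ≤ m) :
    ∃ u ∈ Icc x y, infDist (η u) A ≤ m ∧ infDist (η u) B ≤ m := by
  by_cases hxB : infDist (η x) B ≤ m
  · exact ⟨x, ⟨le_rfl, hxy⟩, hx, hxB⟩
  by_cases hyA : infDist (η y) A ≤ m
  · exact ⟨y, ⟨hxy, le_rfl⟩, hyA, hy⟩
  push_neg at hxB hyA
  have hcont' : ContinuousOn (fun u => infDist (η u) A - infDist (η u) B) (Icc x y) :=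
    ((continuous_infDist_pt A).comp_continuousOn hcont).sub
      ((continuous_infDist_pt B).comp_continuousOn hcont)
  have h0 : (0:ℝ) ∈ Icc (infDist (η x) A - infDist (η x) B)
      (infDist (η y) A - infDist (η y) B) := ⟨by linarith, by linarith⟩
  obtain ⟨u, hu, hu0⟩ := intermediate_value_Icc hxy hcont' h0
  have heq : infDist (η u) A = infDist (η u) B := by
    have : infDist (η u) A - infDist (η u) B = 0 := hu0
    linarith
  rcases hcover u hu with h1 | h2
  · exact ⟨u, hu, h1, heq ▸ h1⟩
  · exact ⟨u, hu, heq ▸ h2, h2⟩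

lemma core {X : Type u} [MetricSpace X] {M : ℝ → ℝ → ℝ} {C lam eps : ℝ} {γ : ℝ → X}
    {I : Set ℝ}
    (hC : 1 ≤ C) (hlam : 1 ≤ lam) (heps : 0 ≤ eps) (hm0 : 0 ≤ M lam eps)
    (hγ : IsQuasiGeodesicOn γ I C C) (hM : IsMorseWith M γ I)
    {η : ℝ → X} {a b : ℝ} (hab : a ≤ b) (hcont : ContinuousOn η (Icc a b))
    (hqg : IsQuasiGeodesicOn η (Icc a b) lam eps)
    {j₁ j₂ : ℝ} (hj₁ : j₁ ∈ I) (hj₂ : j₂ ∈ I) (hηa : η a = γ j₁) (hηb : η b = γ j₂)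
    {c : ℝ} (hc : c ∈ I) (hc₁ : j₁ ≤ c) (hc₂ : j₂ ≤ c)
    {t : ℝ} (ht : t ∈ Icc a b) {s : ℝ} (hs : s ∈ I) (hcs : c ≤ s)
    (hst : dist (η t) (γ s) ≤ M lam eps) :
    dist (η t) (γ c) ≤ f2aux C (M lam eps) lam eps := by
  set m := M lam eps with hmdef
  have hC0 : (0:ℝ) < C := by linarith
  have hlam0 : (0:ℝ) < lam := by linarith
  set A := γ '' (I ∩ Iic c) with hAdef
  set B := γ '' (I ∩ Ici c) with hBdef
  have hmemA : ∀ w : ℝ, w ∈ I → w ≤ c → γ w ∈ A := by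
    rw [hAdef]; exact fun w hw h => ⟨w, ⟨hw, h⟩, rfl⟩
  have hmemB : ∀ w : ℝ, w ∈ I → c ≤ w → γ w ∈ B := by
    rw [hBdef]; exact fun w hw h => ⟨w, ⟨hw, h⟩, rfl⟩
  have hAne : A.Nonempty := ⟨γ c, hmemA c hc le_rfl⟩
  have hBne : B.Nonempty := ⟨γ c, hmemB c hc le_rfl⟩
  have hMorse : ∀ u ∈ Icc a b, ∃ w ∈ I, dist (η u) (γ w) ≤ m :=
    hM lam eps hlam heps η a b hab hcont hqg ⟨j₁, hj₁, hηa.symm⟩ ⟨j₂, hj₂, hηb.symm⟩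
  have hcover : ∀ u ∈ Icc a b, infDist (η u) A ≤ m ∨ infDist (η u) B ≤ m := by
    intro u hu
    obtain ⟨w, hw, hd⟩ := hMorse u hu
    rcases le_total w c with h | h
    · exact Or.inl ((infDist_le_dist_of_mem (hmemA w hw h)).trans hd)
    · exact Or.inr ((infDist_le_dist_of_mem (hmemB w hw h)).trans hd)
  have hat : a ≤ t := ht.1
  have htb : t ≤ b := ht.2
  have hxA : infDist (η a) A ≤ m := by
    rw [hηa]
    calc infDist (γ j₁) A ≤ dist (γ j₁) (γ j₁) :=
          infDist_le_dist_of_mem (hmemA j₁ hj₁ hc₁)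
      _ = 0 := dist_self _
      _ ≤ m := hm0
  have hbA : infDist (η b) A ≤ m := by
    rw [hηb]
    calc infDist (γ j₂) A ≤ dist (γ j₂) (γ j₂) :=
          infDist_le_dist_of_mem (hmemA j₂ hj₂ hc₂)
      _ = 0 := dist_self _
      _ ≤ m := hm0
  have htB : infDist (η t) B ≤ m := (infDist_le_dist_of_mem (hmemB s hs hcs)).trans hst
  obtain ⟨u₁, hu₁mem, hu₁A, hu₁B⟩ := crossing η a t hat
    (hcont.mono (Icc_subset_Icc le_rfl htb)) A B m
    (fun u hu => hcover u ⟨hu.1, hu.2.trans htb⟩) hxA htB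
  obtain ⟨u₂, hu₂mem, hu₂B, hu₂A⟩ := crossing η t b htb
    (hcont.mono (Icc_subset_Icc hat le_rfl)) B A m
    (fun u hu => (hcover u ⟨hat.trans hu.1, hu.2⟩).symm) htB hbA
  obtain ⟨z₁, hz₁mem, hz₁d⟩ := exists_close hAne hu₁A
  rw [hAdef] at hz₁mem
  obtain ⟨p₁, ⟨hp₁I, hp₁c⟩, rfl⟩ := hz₁mem
  obtain ⟨w₁, hw₁mem, hw₁d⟩ := exists_close hBne hu₁B
  rw [hBdef] at hw₁mem
  obtain ⟨q₁, ⟨hq₁I, hq₁c⟩, rfl⟩ := hw₁mem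
  obtain ⟨z₂, hz₂mem, hz₂d⟩ := exists_close hAne hu₂A
  rw [hAdef] at hz₂mem
  obtain ⟨p₂, ⟨hp₂I, hp₂c⟩, rfl⟩ := hz₂mem
  obtain ⟨w₂, hw₂mem, hw₂d⟩ := exists_close hBne hu₂B
  rw [hBdef] at hw₂mem
  obtain ⟨q₂, ⟨hq₂I, hq₂c⟩, rfl⟩ := hw₂mem
  -- bound q₁ - c and q₂ - c
  have key : ∀ p q : ℝ, p ∈ I → q ∈ I → p ≤ c → c ≤ q →
      ∀ u : ℝ, dist (η u) (γ p) ≤ m + 1 → dist (η u) (γ q) ≤ m + 1 →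
      dist (γ q) (γ c) ≤ C * (C * (2 * m + 2 + C)) + C := by
    intro p q hpI hqI hpc hcq u hdp hdq
    have htri := dist_triangle (γ p) (η u) (γ q)
    rw [dist_comm (γ p) (η u)] at htri
    have hdpq : dist (γ p) (γ q) ≤ 2 * m + 2 := by linarith
    have hlow := (hγ p hpI q hqI).1
    have habs : |p - q| = q - p := by
      rw [abs_sub_comm]; exact abs_of_nonneg (by linarith)
    rw [habs] at hlow
    have h' : 1 / C * (q - p) ≤ 2 * m + 2 + C := by linarith
    have hKb : q - p ≤ C * (2 * m + 2 + C) := by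
      calc q - p = C * (1 / C * (q - p)) := by field_simp
        _ ≤ C * (2 * m + 2 + C) := mul_le_mul_of_nonneg_left h' hC0.le
    have hqcK : |q - c| ≤ C * (2 * m + 2 + C) := by
      rw [abs_of_nonneg (by linarith)]; linarith
    have h2 := (hγ q hqI c hc).2
    have := mul_le_mul_of_nonneg_left hqcK hC0.le
    linarith
  have hdq₁c : dist (γ q₁) (γ c) ≤ C * (C * (2 * m + 2 + C)) + C :=
    key p₁ q₁ hp₁I hq₁I hp₁c hq₁c u₁ hz₁d hw₁d
  have hdq₂c : dist (γ q₂) (γ c) ≤ C * (C * (2 * m + 2 + C)) + C :=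
    key p₂ q₂ hp₂I hq₂I hp₂c hq₂c u₂ hz₂d hw₂d
  -- bound dist (η u₁) (η u₂)
  have hdu : dist (η u₁) (η u₂) ≤
      2 * m + 2 + 2 * (C * (C * (2 * m + 2 + C)) + C) := by
    have h4 := dist_triangle4 (η u₁) (γ q₁) (γ q₂) (η u₂)
    have hmid := dist_triangle (γ q₁) (γ c) (γ q₂)
    rw [dist_comm (γ c) (γ q₂)] at hmid
    rw [dist_comm (γ q₂) (η u₂)] at h4
    linarith
  have hu₁ab : u₁ ∈ Icc a b := ⟨hu₁mem.1, hu₁mem.2.trans htb⟩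
  have hu₂ab : u₂ ∈ Icc a b := ⟨hat.trans hu₂mem.1, hu₂mem.2⟩
  have hlow₂ := (hqg u₁ hu₁ab u₂ hu₂ab).1
  have huu : |u₁ - u₂| ≤
      lam * ((2 * m + 2 + 2 * (C * (C * (2 * m + 2 + C)) + C)) + eps) := by
    have h' : 1 / lam * |u₁ - u₂| ≤
        (2 * m + 2 + 2 * (C * (C * (2 * m + 2 + C)) + C)) + eps := by linarith
    calc |u₁ - u₂| = lam * (1 / lam * |u₁ - u₂|) := by field_simp
      _ ≤ _ := mul_le_mul_of_nonneg_left h' hlam0.le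
  have htu₁ : |t - u₁| ≤
      lam * ((2 * m + 2 + 2 * (C * (C * (2 * m + 2 + C)) + C)) + eps) := by
    have h1 : u₁ ≤ t := hu₁mem.2
    have h2 : t ≤ u₂ := hu₂mem.1
    have habs1 : |t - u₁| = t - u₁ := abs_of_nonneg (by linarith)
    have habs2 : |u₁ - u₂| = u₂ - u₁ := by
      rw [abs_sub_comm]; exact abs_of_nonneg (by linarith)
    rw [habs2] at huu; rw [habs1]; linarith
  have hdt := (hqg t ht u₁ hu₁ab).2
  have hdt' : dist (η t) (η u₁) ≤
      lam * (lam * ((2 * m + 2 + 2 * (C * (C * (2 * m + 2 + C)) + C)) + eps)) + eps := by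
    have := mul_le_mul_of_nonneg_left htu₁ hlam0.le
    linarith
  have hfinal := dist_triangle4 (η t) (η u₁) (γ q₁) (γ c)
  have hring : lam * (lam * ((2 * m + 2 + 2 * (C * (C * (2 * m + 2 + C)) + C)) + eps)) =
      lam ^ 2 * ((2 * m + 2 + 2 * (C * (C * (2 * m + 2 + C)) + C)) + eps) := by ring
  unfold f2aux
  linarith

lemma qg_neg {X : Type u} [MetricSpace X] {γ : ℝ → X} {I : Set ℝ} {L E : ℝ}
    (h : IsQuasiGeodesicOn γ I L E) :
    IsQuasiGeodesicOn (fun r => γ (-r)) ((fun r : ℝ => -r) ⁻¹' I) L E := by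
  intro s hs t ht
  have h' := h (-s) hs (-t) ht
  have habs : |(-s) - (-t)| = |s - t| := by
    rw [show -s - -t = -(s - t) by ring, abs_neg]
  rw [habs] at h'
  exact h'

lemma morse_neg {X : Type u} [MetricSpace X] {M : ℝ → ℝ → ℝ} {γ : ℝ → X} {I : Set ℝ}
    (h : IsMorseWith M γ I) :
    IsMorseWith M (fun r => γ (-r)) ((fun r : ℝ => -r) ⁻¹' I) := by
  have himg : (fun r => γ (-r)) '' ((fun r : ℝ => -r) ⁻¹' I) = γ '' I := by
    ext x
    constructor
    · rintro ⟨r, hr, rfl⟩; exact ⟨-r, hr, rfl⟩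
    · rintro ⟨r, hr, rfl⟩
      exact ⟨-r, by simpa using hr, by simp⟩
  intro lam eps hl he η a b hab hcont hqg ha hb t ht
  obtain ⟨w, hw, hd⟩ := h lam eps hl he η a b hab hcont hqg
    (by rwa [himg] at ha) (by rwa [himg] at hb) t ht
  exact ⟨-w, by simpa using hw, by simpa using hd⟩

lemma main_aux {X : Type u} [MetricSpace X] (M : ℝ → ℝ → ℝ) (C : ℝ) (γ : ℝ → X)
    (I J : Set ℝ) (hMg : IsMorseGauge M) (hC : 1 ≤ C)
    (hγ : IsQuasiGeodesicOn γ I C C) (hM : IsMorseWith M γ I)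
    (hJI : J ⊆ I) (hJc : J.OrdConnected) :
    IsMorseWith (fun l e => f2aux C (M l e) l e) γ J := by
  intro lam eps hlam heps η a b hab hcont hqg hηa hηb t ht
  obtain ⟨j₁, hj₁J, hγj₁⟩ := hηa
  obtain ⟨j₂, hj₂J, hγj₂⟩ := hηb
  have hm0 : 0 ≤ M lam eps := hMg.1 lam eps hlam heps
  have hminJ : min j₁ j₂ ∈ J := by
    rcases le_total j₁ j₂ with h | h
    · rwa [min_eq_left h]
    · rwa [min_eq_right h]
  have hmaxJ : max j₁ j₂ ∈ J := by
    rcases le_total j₁ j₂ with h | h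
    · rwa [max_eq_right h]
    · rwa [max_eq_left h]
  obtain ⟨s, hsI, hds⟩ := hM lam eps hlam heps η a b hab hcont hqg
    ⟨j₁, hJI hj₁J, hγj₁⟩ ⟨j₂, hJI hj₂J, hγj₂⟩ t ht
  rcases le_total s (max j₁ j₂) with hsmax | hsmax
  · rcases le_total (min j₁ j₂) s with hsmin | hsmin
    · exact ⟨s, hJc.out hminJ hmaxJ ⟨hsmin, hsmax⟩,
        hds.trans (f2aux_basic hC hm0 hlam heps).2⟩
    · refine ⟨min j₁ j₂, hminJ, ?_⟩
      have hcore := core (γ := fun r => γ (-r)) (I := (fun r : ℝ => -r) ⁻¹' I)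
        hC hlam heps hm0 (qg_neg hγ) (morse_neg hM) hab hcont hqg
        (j₁ := -j₁) (by simpa using hJI hj₁J) (j₂ := -j₂) (by simpa using hJI hj₂J)
        (by simpa using hγj₁.symm) (by simpa using hγj₂.symm)
        (c := -(min j₁ j₂)) (by simpa using hJI hminJ)
        (neg_le_neg (min_le_left _ _)) (neg_le_neg (min_le_right _ _))
        ht (s := -s) (by simpa using hsI) (neg_le_neg hsmin) (by simpa using hds)
      simpa using hcore
  · refine ⟨max j₁ j₂, hmaxJ, ?_⟩
    exact core hC hlam heps hm0 hγ hM hab hcont hqg (hJI hj₁J) (hJI hj₂J)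
      hγj₁.symm hγj₂.symm (hJI hmaxJ) (le_max_left _ _) (le_max_right _ _)
      ht hsI hsmax hds

end Statement2Aux


/-- There is an increasing function `f₂ : 𝓜 × ℝ≥1 → 𝓜` such that, in any
geodesic metric space, the restriction of an `M`-Morse geodesic to a subinterval is
`f₂ M C`-Morse, and more generally any subsegment of an `M`-Morse `C`-quasi-geodesic is
`f₂ M C`-Morse. -/
theorem statement2 : ∃ f₂ : (ℝ → ℝ → ℝ) → ℝ → (ℝ → ℝ → ℝ),
    (∀ M C, IsMorseGauge M → 1 ≤ C → IsMorseGauge (f₂ M C)) ∧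
    (∀ M M' C C', IsMorseGauge M → IsMorseGauge M' → 1 ≤ C →
      GaugeLE M M' → C ≤ C' → GaugeLE (f₂ M C) (f₂ M' C')) ∧
    (∀ (X : Type u) [inst : MetricSpace X], GeodesicSpace X →
      ∀ (M : ℝ → ℝ → ℝ) (C : ℝ) (γ : ℝ → X) (I J : Set ℝ),
        IsMorseGauge M → 1 ≤ C →
        IsGeodesicOn γ I → IsMorseWith M γ I →
        J ⊆ I → J.OrdConnected →
        IsMorseWith (f₂ M C) γ J) ∧
    (∀ (X : Type u) [inst : MetricSpace X], GeodesicSpace X →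
      ∀ (M : ℝ → ℝ → ℝ) (C : ℝ) (γ : ℝ → X) (I J : Set ℝ),
        IsMorseGauge M → 1 ≤ C →
        IsQuasiGeodesicOn γ I C C → IsMorseWith M γ I →
        J ⊆ I → J.OrdConnected →
        IsMorseWith (f₂ M C) γ J) := by
  classical
  refine ⟨fun M C l e => Statement2Aux.f2aux C (M l e) l e, ?_, ?_, ?_, ?_⟩
  · intro M C hMg hC
    refine ⟨fun l e hl he => (Statement2Aux.f2aux_basic hC (hMg.1 l e hl he) hl he).1,
      fun l l' e e' hl he hll hee =>
        Statement2Aux.f2aux_mono hC (hMg.1 l e hl he) hl he le_rfl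
          (hMg.2.1 l l' e e' hl he hll hee) hll hee,
      fun l hl => ?_⟩
    have houter : Continuous (fun p : ℝ × ℝ => Statement2Aux.f2aux C p.1 l p.2) := by
      unfold Statement2Aux.f2aux; fun_prop
    exact houter.comp_continuousOn ((hMg.2.2 l hl).prodMk continuousOn_id)
  · intro M M' C C' hMg hMg' hC hMM hCC l e hl he
    exact Statement2Aux.f2aux_mono hC (hMg.1 l e hl he) hl he hCC (hMM l e hl he)
      le_rfl le_rfl
  · intro X inst hgeo M C γ I J hMg hC hgeod hMw hJI hJc
    have hqg : IsQuasiGeodesicOn γ I C C := by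
      intro s hs t ht
      rw [hgeod s hs t ht]
      have hC0 : (0:ℝ) < C := by linarith
      have h1 : 1 / C ≤ 1 := by rw [div_le_one hC0]; linarith
      have h2 := mul_le_mul_of_nonneg_right h1 (abs_nonneg (s - t))
      constructor
      · nlinarith [abs_nonneg (s - t)]
      · nlinarith [abs_nonneg (s - t)]
    exact Statement2Aux.main_aux M C γ I J hMg hC hqg hMw hJI hJc
  · intro X inst hgeo M C γ I J hMg hC hqg hMw hJI hJc
    exact Statement2Aux.main_aux M C γ I J hMg hC hqg hMw hJI hJc
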